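/- arXiv:0904.2426 — 3 statements merged into one kernel-verified Lean document; each statement's English description precedes it below -/
import Mathlib

section
/- Let F₁ and F₂ be probability distribution functions of positive random variables and suppose sup_{x>0} |F₁(x) − F₂(x)| < ε. Then for every integer i ≥ 1 and any α > 0, |∫₀^∞ e^{-αx} (αx)^i / i! dF₁(x) − ∫₀^∞ e^{-αx} (αx)^i / i! dF₂(x)| < 2ε. -/
open MeasureTheory Filter Set

namespace Stmt2Aux


noncomputable def g (α : ℝ) (i : ℕ) (t : ℝ) : ℝ :=
  Real.exp (-α * t) * (α * t) ^ i / (Nat.factorial i)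

noncomputable def g' (α : ℝ) (i : ℕ) (t : ℝ) : ℝ :=
  α * Real.exp (-α * t) * ((i : ℝ) * (α * t) ^ (i - 1) - (α * t) ^ i) / (Nat.factorial i)

lemma hasDerivAt_g (α : ℝ) (i : ℕ) (t : ℝ) : HasDerivAt (g α i) (g' α i t) t := by
  have h0 : HasDerivAt (fun t : ℝ => -α * t) (-α) t := by
    simpa using (hasDerivAt_id t).const_mul (-α)
  have h1 : HasDerivAt (fun t : ℝ => Real.exp (-α * t)) (Real.exp (-α * t) * (-α)) t := h0.exp
  have h2 : HasDerivAt (fun t : ℝ => α * t) α t := by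
    simpa using (hasDerivAt_id t).const_mul α
  have h3 : HasDerivAt (fun t : ℝ => (α * t) ^ i) ((i : ℝ) * (α * t) ^ (i - 1) * α) t := h2.pow i
  have h4 := (h1.mul h3).div_const (Nat.factorial i : ℝ)
  refine h4.congr_deriv ?_
  unfold g'
  ring

lemma cont_g' (α : ℝ) (i : ℕ) : Continuous (g' α i) := by
  unfold g'
  fun_prop

lemma g_zero (α : ℝ) {i : ℕ} (hi : 1 ≤ i) : g α i 0 = 0 := by
  simp [g, zero_pow (by omega : i ≠ 0)]

lemma g_nonneg {α : ℝ} (hα : 0 < α) (i : ℕ) {t : ℝ} (ht : 0 ≤ t) : 0 ≤ g α i t := by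
  unfold g
  positivity

lemma g_le_one {α : ℝ} (hα : 0 < α) (i : ℕ) {t : ℝ} (ht : 0 ≤ t) : g α i t ≤ 1 := by
  have hx : 0 ≤ α * t := by positivity
  have h1 : (α * t) ^ i / (Nat.factorial i : ℝ) ≤ Real.exp (α * t) := by
    calc (α * t) ^ i / (Nat.factorial i : ℝ)
        ≤ ∑ k ∈ Finset.range (i + 1), (α * t) ^ k / (Nat.factorial k : ℝ) := by
          refine Finset.single_le_sum (f := fun k => (α * t) ^ k / (Nat.factorial k : ℝ))
            (fun k _ => by positivity) (Finset.self_mem_range_succ i)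
      _ ≤ Real.exp (α * t) := Real.sum_le_exp_of_nonneg hx _
  have : g α i t = ((α * t) ^ i / (Nat.factorial i : ℝ)) * Real.exp (-α * t) := by
    unfold g; ring
  rw [this]
  calc ((α * t) ^ i / (Nat.factorial i : ℝ)) * Real.exp (-α * t)
      ≤ Real.exp (α * t) * Real.exp (-α * t) :=
        mul_le_mul_of_nonneg_right h1 (Real.exp_nonneg _)
    _ = 1 := by rw [← Real.exp_add]; simp

lemma g_tendsto {α : ℝ} (hα : 0 < α) (i : ℕ) : Tendsto (g α i) atTop (nhds 0) := by
  have h : Tendsto (fun t : ℝ => α * t) atTop atTop :=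
    Tendsto.const_mul_atTop hα tendsto_id
  have h2 := ((Real.tendsto_pow_mul_exp_neg_atTop_nhds_zero i).comp h).div_const
    (Nat.factorial i : ℝ)
  simp only [Function.comp] at h2
  have heq : (g α i) = fun t => (α * t) ^ i * Real.exp (-(α * t)) / (Nat.factorial i : ℝ) := by
    funext t
    unfold g
    rw [neg_mul]
    ring
  rw [heq]
  simpa using h2

lemma g'_factor {α : ℝ} {i : ℕ} (hi : 1 ≤ i) (t : ℝ) :
    g' α i t = α * Real.exp (-α * t) * (α * t) ^ (i - 1) * ((i : ℝ) - α * t)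
      / (Nat.factorial i) := by
  obtain ⟨j, rfl⟩ : ∃ j, i = j + 1 := ⟨i - 1, (Nat.succ_pred_eq_of_pos hi).symm⟩
  unfold g'
  simp only [Nat.add_sub_cancel, pow_succ]
  ring

lemma g'_nonneg {α : ℝ} (hα : 0 < α) {i : ℕ} (hi : 1 ≤ i) {t : ℝ} (ht : 0 ≤ t)
    (hti : α * t ≤ (i : ℝ)) : 0 ≤ g' α i t := by
  rw [g'_factor hi]
  have h1 : (0:ℝ) ≤ (i : ℝ) - α * t := by linarith
  positivity

lemma g'_nonpos {α : ℝ} (hα : 0 < α) {i : ℕ} (hi : 1 ≤ i) {t : ℝ} (ht : 0 ≤ t)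
    (hti : (i : ℝ) ≤ α * t) : g' α i t ≤ 0 := by
  rw [g'_factor hi]
  have h1 : (i : ℝ) - α * t ≤ 0 := by linarith
  have h2 : (0:ℝ) ≤ α * Real.exp (-α * t) * (α * t) ^ (i - 1) := by positivity
  have := mul_nonpos_of_nonneg_of_nonpos h2 h1
  exact div_nonpos_of_nonpos_of_nonneg this (Nat.cast_nonneg _)



-- basic CDF facts
lemma F_tendsto_atBot (F : StieltjesFunction ℝ) (hF0 : ∀ x ≤ (0:ℝ), F x = 0) :
    Tendsto F atBot (nhds 0) := by
  refine Tendsto.congr' ?_ tendsto_const_nhds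
  filter_upwards [eventually_le_atBot (0:ℝ)] with x hx
  exact (hF0 x hx).symm

lemma F_nonneg (F : StieltjesFunction ℝ) (hF0 : ∀ x ≤ (0:ℝ), F x = 0) (t : ℝ) : 0 ≤ F t := by
  rcases le_or_gt t 0 with h | h
  · rw [hF0 t h]
  · rw [← hF0 0 le_rfl]; exact F.mono h.le

lemma F_le_one (F : StieltjesFunction ℝ) (hF1 : Tendsto F atTop (nhds 1)) (t : ℝ) : F t ≤ 1 :=
  F.mono.ge_of_tendsto hF1 t

lemma measure_Ioi_eq (F : StieltjesFunction ℝ) (hF0 : ∀ x ≤ (0:ℝ), F x = 0)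
    (hF1 : Tendsto F atTop (nhds 1)) (t : ℝ) :
    F.measure (Ioi t) = ENNReal.ofReal (1 - F t) := by
  have hbot := F_tendsto_atBot F hF0
  have hprob : IsProbabilityMeasure F.measure := F.isProbabilityMeasure hbot hF1
  have h1 : F.measure (Iic t) = ENNReal.ofReal (F t) := by
    simpa using F.measure_Iic hbot t
  rw [← compl_Iic, measure_compl measurableSet_Iic (measure_ne_top _ _), h1, measure_univ,
    ENNReal.ofReal_sub 1 (F_nonneg F hF0 t), ENNReal.ofReal_one]

lemma g'_integrableOn {α : ℝ} (hα : 0 < α) {i : ℕ} (hi : 1 ≤ i) :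
    IntegrableOn (g' α i) (Ioi (0:ℝ)) := by
  have hm : (0:ℝ) ≤ (i : ℝ) / α := by positivity
  rw [← Ioc_union_Ioi_eq_Ioi hm]
  refine IntegrableOn.union ((cont_g' α i).integrableOn_Ioc) ?_
  refine integrableOn_Ioi_deriv_of_nonpos' (fun x _ => hasDerivAt_g α i x) ?_ (g_tendsto hα i)
  intro x hx
  have hx0 : (0:ℝ) < x := lt_of_le_of_lt hm hx
  refine g'_nonpos hα hi hx0.le ?_
  have : (i : ℝ) / α < x := hx
  rw [div_lt_iff₀ hα] at this
  linarith

lemma key (F : StieltjesFunction ℝ) (hF0 : ∀ x ≤ (0:ℝ), F x = 0)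
    (hF1 : Tendsto F atTop (nhds 1)) {α : ℝ} (hα : 0 < α) {i : ℕ} (hi : 1 ≤ i) :
    ∫ x in Ioi (0:ℝ), g α i x ∂F.measure
      = ∫ t in Ioi (0:ℝ), g' α i t * (1 - F t) := by
  have hbot := F_tendsto_atBot F hF0
  have hprob : IsProbabilityMeasure F.measure := F.isProbabilityMeasure hbot hF1
  set μ := F.measure
  set f : ℝ → ℝ → ℝ := fun t x => if t < x then g' α i t else 0 with hf
  -- integrability on product
  have hmeas : AEStronglyMeasurable (Function.uncurry f)
      ((volume.restrict (Ioi (0:ℝ))).prod (μ.restrict (Ioi (0:ℝ)))) := by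
    have h1 : Function.uncurry f =
        {p : ℝ × ℝ | p.1 < p.2}.indicator (fun p => g' α i p.1) := by
      funext p
      simp only [Function.uncurry, Set.indicator_apply, Set.mem_setOf_eq, hf]
    rw [h1]
    exact (Measurable.indicator ((cont_g' α i).measurable.comp measurable_fst)
      (measurableSet_lt measurable_fst measurable_snd)).aestronglyMeasurable
  have hbound : Integrable (fun p : ℝ × ℝ => |g' α i p.1| * 1)
      ((volume.restrict (Ioi (0:ℝ))).prod (μ.restrict (Ioi (0:ℝ)))) :=
    (g'_integrableOn hα hi).abs.mul_prod (integrable_const 1)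
  have hint : Integrable (Function.uncurry f)
      ((volume.restrict (Ioi (0:ℝ))).prod (μ.restrict (Ioi (0:ℝ)))) := by
    refine hbound.mono' hmeas (Filter.Eventually.of_forall fun p => ?_)
    simp only [Function.uncurry, hf]
    split_ifs
    · simp [abs_le_abs]
    · simp [abs_nonneg]
  have swap := integral_integral_swap hint
  -- LHS of swap: ∫ t, g' t * (1 - F t)
  have hL : (∫ t in Ioi (0:ℝ), ∫ x in Ioi (0:ℝ), f t x ∂μ)
      = ∫ t in Ioi (0:ℝ), g' α i t * (1 - F t) := by
    refine setIntegral_congr_fun measurableSet_Ioi (fun t ht => ?_)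
    have h1 : (fun x => f t x) = (Ioi t).indicator (fun _ => g' α i t) := by
      funext x
      simp only [hf, Set.indicator_apply, Set.mem_Ioi]
    rw [h1, integral_indicator_const _ measurableSet_Ioi, measureReal_def, Measure.restrict_apply measurableSet_Ioi]
    have h2 : Ioi t ∩ Ioi (0:ℝ) = Ioi t := inter_eq_left.mpr (Ioi_subset_Ioi (le_of_lt ht))
    rw [h2, measure_Ioi_eq F hF0 hF1 t, ENNReal.toReal_ofReal (by linarith [F_le_one F hF1 t]),
      smul_eq_mul, mul_comm]
  -- RHS of swap: ∫ x, g x ∂μ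
  have hR : (∫ x in Ioi (0:ℝ), ∫ t in Ioi (0:ℝ), f t x ∂(volume) ∂μ)
      = ∫ x in Ioi (0:ℝ), g α i x ∂μ := by
    refine integral_congr_ae ?_
    filter_upwards [ae_restrict_mem measurableSet_Ioi] with x hx
    have h1 : (fun t => f t x) = (Iio x).indicator (g' α i) := by
      funext t
      simp only [hf, Set.indicator_apply, Set.mem_Iio]
    rw [h1, setIntegral_indicator measurableSet_Iio, Ioi_inter_Iio]
    rw [← integral_Ioc_eq_integral_Ioo, ← intervalIntegral.integral_of_le (le_of_lt hx),
      intervalIntegral.integral_eq_sub_of_hasDerivAt (fun t _ => hasDerivAt_g α i t)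
        ((cont_g' α i).intervalIntegrable 0 x), g_zero α hi, sub_zero]
  rw [← hL, swap, hR]



lemma tail_integrableOn {α : ℝ} (hα : 0 < α) {i : ℕ} (hi : 1 ≤ i) :
    IntegrableOn (g' α i) (Ioi ((i:ℝ)/α)) := by
  have hm : (0:ℝ) ≤ (i : ℝ) / α := by positivity
  refine integrableOn_Ioi_deriv_of_nonpos' (fun x _ => hasDerivAt_g α i x) ?_ (g_tendsto hα i)
  intro x hx
  have hx0 : (0:ℝ) < x := lt_of_le_of_lt hm hx
  refine g'_nonpos hα hi hx0.le ?_
  have h : (i : ℝ) / α < x := hx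
  rw [div_lt_iff₀ hα] at h
  linarith

lemma abs_g'_integral_le_two {α : ℝ} (hα : 0 < α) {i : ℕ} (hi : 1 ≤ i) :
    ∫ t in Ioi (0:ℝ), |g' α i t| ≤ 2 := by
  set m : ℝ := (i : ℝ) / α with hm_def
  have hm : (0:ℝ) ≤ m := by positivity
  have hA : IntegrableOn (fun t => |g' α i t|) (Ioc (0:ℝ) m) :=
    ((cont_g' α i).abs).integrableOn_Ioc
  have hB : IntegrableOn (fun t => |g' α i t|) (Ioi m) := (tail_integrableOn hα hi).abs
  rw [← Ioc_union_Ioi_eq_Ioi hm,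
    setIntegral_union Ioc_disjoint_Ioi_same measurableSet_Ioi hA hB]
  have hAe : ∫ t in Ioc (0:ℝ) m, |g' α i t| = g α i m := by
    have h1 : ∫ t in Ioc (0:ℝ) m, |g' α i t| = ∫ t in Ioc (0:ℝ) m, g' α i t := by
      refine setIntegral_congr_fun measurableSet_Ioc (fun t ht => ?_)
      refine abs_of_nonneg (g'_nonneg hα hi ht.1.le ?_)
      have := ht.2
      rw [hm_def, le_div_iff₀ hα] at this
      linarith
    rw [h1, ← intervalIntegral.integral_of_le hm,
      intervalIntegral.integral_eq_sub_of_hasDerivAt (fun t _ => hasDerivAt_g α i t)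
        ((cont_g' α i).intervalIntegrable 0 m), g_zero α hi, sub_zero]
  have hBe : ∫ t in Ioi m, |g' α i t| = g α i m := by
    have h1 : ∫ t in Ioi m, |g' α i t| = ∫ t in Ioi m, -(g' α i t) := by
      refine setIntegral_congr_fun measurableSet_Ioi (fun t ht => ?_)
      have ht0 : (0:ℝ) < t := lt_of_le_of_lt hm ht
      refine abs_of_nonpos (g'_nonpos hα hi ht0.le ?_)
      have h : m < t := ht
      rw [hm_def, div_lt_iff₀ hα] at h
      linarith
    have h2 : ∫ t in Ioi m, g' α i t = 0 - g α i m := by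
      refine integral_Ioi_of_hasDerivAt_of_nonpos' (fun x _ => hasDerivAt_g α i x) ?_
        (g_tendsto hα i)
      intro x hx
      have hx0 : (0:ℝ) < x := lt_of_le_of_lt hm hx
      refine g'_nonpos hα hi hx0.le ?_
      have h : m < x := hx
      rw [hm_def, div_lt_iff₀ hα] at h
      linarith
    rw [h1, integral_neg, h2]
    ring
  have := g_le_one hα i hm
  rw [hAe, hBe]
  linarith


end Stmt2Aux


open Stmt2Aux in
theorem stmt_2 (F₁ F₂ : StieltjesFunction ℝ)
    (hF₁0 : ∀ x ≤ (0 : ℝ), F₁ x = 0) (hF₂0 : ∀ x ≤ (0 : ℝ), F₂ x = 0)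
    (hF₁1 : Tendsto F₁ atTop (nhds 1)) (hF₂1 : Tendsto F₂ atTop (nhds 1))
    (ε : ℝ) (hε : 0 < ε)
    (hsup : (⨆ x : Ioi (0 : ℝ), |F₁ x - F₂ x|) < ε)
    (α : ℝ) (hα : 0 < α) (i : ℕ) (hi : 1 ≤ i) :
    |(∫ x in Ioi (0 : ℝ), Real.exp (-α * x) * (α * x) ^ i / (Nat.factorial i) ∂F₁.measure)
      - ∫ x in Ioi (0 : ℝ), Real.exp (-α * x) * (α * x) ^ i / (Nat.factorial i) ∂F₂.measure|
      < 2 * ε := by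
  set S : ℝ := ⨆ x : Ioi (0 : ℝ), |F₁ x - F₂ x| with hS_def
  have hbdd : BddAbove (range fun x : Ioi (0:ℝ) => |F₁ x - F₂ x|) := by
    refine ⟨2, ?_⟩
    rintro _ ⟨x, rfl⟩
    have h1 := F_nonneg F₁ hF₁0 x
    have h2 := F_nonneg F₂ hF₂0 x
    have h3 := F_le_one F₁ hF₁1 (x : ℝ)
    have h4 := F_le_one F₂ hF₂1 (x : ℝ)
    rw [abs_le]; constructor <;> linarith
  have habs : ∀ t : ℝ, 0 < t → |F₂ t - F₁ t| ≤ S := by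
    intro t ht
    rw [abs_sub_comm]
    exact le_ciSup hbdd ⟨t, ht⟩
  have hS0 : 0 ≤ S :=
    le_trans (abs_nonneg _) (le_ciSup hbdd ⟨1, by norm_num⟩)
  have hkey₁ := key F₁ hF₁0 hF₁1 hα hi
  have hkey₂ := key F₂ hF₂0 hF₂1 hα hi
  have hg'i := g'_integrableOn hα hi
  have hint : ∀ (F : StieltjesFunction ℝ), (∀ x ≤ (0:ℝ), F x = 0) →
      Tendsto F atTop (nhds 1) →
      Integrable (fun t => g' α i t * (1 - F t)) (volume.restrict (Ioi (0:ℝ))) := by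
    intro F hF0 hF1
    refine hg'i.abs.mono' ?_ ?_
    · exact ((cont_g' α i).aestronglyMeasurable).mul
        ((measurable_const.sub F.mono.measurable).aestronglyMeasurable)
    · filter_upwards [ae_restrict_mem measurableSet_Ioi] with t _
      have h1 := F_nonneg F hF0 t
      have h2 := F_le_one F hF1 t
      rw [Real.norm_eq_abs, abs_mul]
      have : |1 - F t| ≤ 1 := by rw [abs_le]; constructor <;> linarith
      calc |g' α i t| * |1 - F t| ≤ |g' α i t| * 1 :=
            mul_le_mul_of_nonneg_left this (abs_nonneg _)
        _ = |g' α i t| := mul_one _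
  have hdiff :
      (∫ x in Ioi (0:ℝ), Real.exp (-α * x) * (α * x) ^ i / (Nat.factorial i) ∂F₁.measure)
        - (∫ x in Ioi (0:ℝ), Real.exp (-α * x) * (α * x) ^ i / (Nat.factorial i) ∂F₂.measure)
      = ∫ t in Ioi (0:ℝ), g' α i t * (F₂ t - F₁ t) := by
    have e1 : (∫ x in Ioi (0:ℝ), Real.exp (-α * x) * (α * x) ^ i / (Nat.factorial i) ∂F₁.measure)
        = ∫ t in Ioi (0:ℝ), g' α i t * (1 - F₁ t) := hkey₁
    have e2 : (∫ x in Ioi (0:ℝ), Real.exp (-α * x) * (α * x) ^ i / (Nat.factorial i) ∂F₂.measure)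
        = ∫ t in Ioi (0:ℝ), g' α i t * (1 - F₂ t) := hkey₂
    rw [e1, e2, ← integral_sub (hint F₁ hF₁0 hF₁1) (hint F₂ hF₂0 hF₂1)]
    refine setIntegral_congr_fun measurableSet_Ioi (fun t _ => ?_)
    ring
  rw [hdiff]
  have hb : |∫ t in Ioi (0:ℝ), g' α i t * (F₂ t - F₁ t)|
      ≤ ∫ t in Ioi (0:ℝ), |g' α i t| * S := by
    rw [← Real.norm_eq_abs]
    refine norm_integral_le_of_norm_le (hg'i.abs.mul_const S) ?_
    filter_upwards [ae_restrict_mem measurableSet_Ioi] with t ht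
    rw [Real.norm_eq_abs, abs_mul]
    exact mul_le_mul_of_nonneg_left (habs t ht) (abs_nonneg _)
  have hc : ∫ t in Ioi (0:ℝ), |g' α i t| * S = (∫ t in Ioi (0:ℝ), |g' α i t|) * S :=
    integral_mul_const S _
  have hd := abs_g'_integral_le_two hα hi
  calc |∫ t in Ioi (0:ℝ), g' α i t * (F₂ t - F₁ t)|
      ≤ (∫ t in Ioi (0:ℝ), |g' α i t|) * S := by rw [← hc]; exact hb
    _ ≤ 2 * S := mul_le_mul_of_nonneg_right hd hS0
    _ < 2 * ε := by rw [hS_def] at *; nlinarith [hsup]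
end

section
/- Let F₁ and F₂ be probability distribution functions of positive random variables satisfying sup_{x>0} [F₁(x) − F₂(x)] < ε₁ and sup_{x>0} [F₂(x) − F₁(x)] < ε₂. Then for every integer i ≥ 1 and any α > 0, ∫₀^∞ e^{-αx} (αx)^i / i! dF₁(x) − ∫₀^∞ e^{-αx} (αx)^i / i! dF₂(x) < ε₁ + ε₂. -/
open MeasureTheory Filter Set Function



lemma aux_pow_le_exp (x : ℝ) (hx : 0 ≤ x) (n : ℕ) : x ^ n / n.factorial ≤ Real.exp x := by
  have h := Real.sum_le_exp_of_nonneg hx (n + 1)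
  refine le_trans ?_ h
  have : ∀ j ∈ Finset.range (n+1), (0:ℝ) ≤ x ^ j / j.factorial := by
    intro j _; positivity
  exact Finset.single_le_sum this (Finset.self_mem_range_succ n)

lemma aux_exp_form (i : ℕ) {w : ℝ} (hw : 0 < w) :
    Real.exp (-w) * w ^ i = Real.exp ((i:ℝ) * Real.log w - w) := by
  rw [Real.exp_sub, Real.exp_nat_mul, Real.exp_log hw, Real.exp_neg]
  field_simp

lemma aux_mono (i : ℕ) {u v : ℝ} (hu : 0 < u) (huv : u ≤ v) (hv : v ≤ i) :
    Real.exp (-u) * u ^ i ≤ Real.exp (-v) * v ^ i := by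
  have hv0 : 0 < v := lt_of_lt_of_le hu huv
  rw [aux_exp_form i hu, aux_exp_form i hv0]
  apply Real.exp_le_exp.mpr
  have hlog : Real.log u - Real.log v ≤ u / v - 1 := by
    rw [← Real.log_div hu.ne' hv0.ne']
    exact Real.log_le_sub_one_of_pos (by positivity)
  have h1 : (i:ℝ) * (Real.log u - Real.log v) ≤ (i:ℝ) * (u / v - 1) :=
    mul_le_mul_of_nonneg_left hlog (by positivity)
  have h2 : (i:ℝ) * (u / v - 1) ≤ u - v := by
    have hq : u / v - 1 = (u - v) / v := by field_simp
    rw [hq, ← mul_div_assoc, div_le_iff₀ hv0]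
    nlinarith [mul_nonneg (sub_nonneg.mpr hv) (sub_nonneg.mpr huv)]
  nlinarith

lemma aux_anti (i : ℕ) {u v : ℝ} (hu : (i:ℝ) ≤ u) (hu0 : 0 < u) (huv : u ≤ v) :
    Real.exp (-v) * v ^ i ≤ Real.exp (-u) * u ^ i := by
  have hv0 : 0 < v := lt_of_lt_of_le hu0 huv
  rw [aux_exp_form i hu0, aux_exp_form i hv0]
  apply Real.exp_le_exp.mpr
  have hlog : Real.log v - Real.log u ≤ v / u - 1 := by
    rw [← Real.log_div hv0.ne' hu0.ne']
    exact Real.log_le_sub_one_of_pos (by positivity)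
  have h1 : (i:ℝ) * (Real.log v - Real.log u) ≤ (i:ℝ) * (v / u - 1) :=
    mul_le_mul_of_nonneg_left hlog (by positivity)
  have h2 : (i:ℝ) * (v / u - 1) ≤ v - u := by
    have hq : v / u - 1 = (v - u) / u := by field_simp
    rw [hq, ← mul_div_assoc, div_le_iff₀ hu0]
    nlinarith [mul_nonneg (sub_nonneg.mpr huv) (sub_nonneg.mpr hu)]
  nlinarith


lemma aux_eq_Ioo (S : Set ℝ) (hopen : IsOpen S) (hord : S.OrdConnected)
    (hne : S.Nonempty) (hbdd : BddAbove S) (hbdd' : BddBelow S) :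
    S = Ioo (sInf S) (sSup S) := by
  ext x
  constructor
  · intro hx
    obtain ⟨ε, hε, hball⟩ := Metric.isOpen_iff.mp hopen x hx
    have h1 : x - ε / 2 ∈ S := hball (by simp [Real.dist_eq, abs_of_nonpos, hε.le]; rw [abs_of_nonneg hε.le]; linarith)
    have h2 : x + ε / 2 ∈ S := hball (by rw [Metric.mem_ball, Real.dist_eq]; rw [abs_of_nonneg (by linarith)]; linarith)
    exact ⟨lt_of_le_of_lt (csInf_le hbdd' h1) (by linarith),
      lt_of_lt_of_le (by linarith) (le_csSup hbdd h2)⟩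
  · rintro ⟨h1, h2⟩
    obtain ⟨u, hu, hux⟩ := (csInf_lt_iff hbdd' hne).mp h1
    obtain ⟨v, hv, hxv⟩ := (lt_csSup_iff hbdd hne).mp h2
    exact hord.out hu hv ⟨hux.le, hxv.le⟩

lemma aux_key_measure (F₁ F₂ : StieltjesFunction ℝ) (t₁ t₂ : ℝ) (ht₁ : 0 ≤ t₁) (ht₂ : 0 ≤ t₂)
    (h₁ : ∀ x > (0:ℝ), F₁ x - F₂ x ≤ t₁) (h₂ : ∀ x > (0:ℝ), F₂ x - F₁ x ≤ t₂)
    (hF₁0 : F₁ 0 = 0) (hF₂0 : F₂ 0 = 0)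
    (S : Set ℝ) (hS : S ⊆ Ioi 0) (hopen : IsOpen S) (hord : S.OrdConnected)
    (hbdd : BddAbove S) :
    F₁.measure S ≤ F₂.measure S + ENNReal.ofReal (t₁ + t₂) := by
  rcases S.eq_empty_or_nonempty with rfl | hne
  · simp
  have hbdd' : BddBelow S := ⟨0, fun x hx => (hS hx).le⟩
  set a := sInf S
  set b := sSup S
  have hSeq : S = Ioo a b := aux_eq_Ioo S hopen hord hne hbdd hbdd'
  have ha0 : 0 ≤ a := le_csInf hne fun x hx => (hS hx).le
  obtain ⟨x₀, hx₀⟩ := hne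
  have hab : a < b := by
    rw [hSeq] at hx₀; exact lt_trans hx₀.1 hx₀.2
  have hb0 : 0 < b := lt_of_le_of_lt ha0 hab
  -- left limits comparison
  have hA : leftLim F₁ b ≤ leftLim F₂ b + t₁ := by
    have l₁ : Tendsto F₁ (nhdsWithin b (Iio b)) (nhds (leftLim F₁ b)) := F₁.mono.tendsto_leftLim b
    have l₂ : Tendsto (fun x => F₂ x + t₁) (nhdsWithin b (Iio b)) (nhds (leftLim F₂ b + t₁)) :=
      (F₂.mono.tendsto_leftLim b).add tendsto_const_nhds
    refine le_of_tendsto_of_tendsto l₁ l₂ ?_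
    · filter_upwards [Ioo_mem_nhdsLT_of_mem (⟨hb0, le_rfl⟩ : b ∈ Ioc 0 b)] with x hx
      have := h₁ x hx.1
      linarith
  have hB : F₂ a - F₁ a ≤ t₂ := by
    rcases eq_or_lt_of_le ha0 with h | h
    · rw [← h, hF₁0, hF₂0]; linarith
    · exact h₂ a h
  rw [hSeq, StieltjesFunction.measure_Ioo, StieltjesFunction.measure_Ioo]
  calc ENNReal.ofReal (leftLim F₁ b - F₁ a)
      ≤ ENNReal.ofReal ((leftLim F₂ b - F₂ a) + (t₁ + t₂)) := by
        apply ENNReal.ofReal_le_ofReal; linarith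
    _ ≤ ENNReal.ofReal (leftLim F₂ b - F₂ a) + ENNReal.ofReal (t₁ + t₂) :=
        ENNReal.ofReal_add_le


theorem stmt_4 (F₁ F₂ : StieltjesFunction ℝ)
    (hF₁0 : ∀ x ≤ (0 : ℝ), F₁ x = 0) (hF₂0 : ∀ x ≤ (0 : ℝ), F₂ x = 0)
    (hF₁1 : Tendsto F₁ atTop (nhds 1)) (hF₂1 : Tendsto F₂ atTop (nhds 1))
    (ε₁ ε₂ : ℝ) (hε₁ : 0 < ε₁) (hε₂ : 0 < ε₂)
    (hsup₁ : (⨆ x : Ioi (0 : ℝ), (F₁ x - F₂ x)) < ε₁)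
    (hsup₂ : (⨆ x : Ioi (0 : ℝ), (F₂ x - F₁ x)) < ε₂)
    (α : ℝ) (hα : 0 < α) (i : ℕ) (hi : 1 ≤ i) :
    (∫ x in Ioi (0 : ℝ), Real.exp (-α * x) * (α * x) ^ i / (Nat.factorial i) ∂F₁.measure)
      - (∫ x in Ioi (0 : ℝ), Real.exp (-α * x) * (α * x) ^ i / (Nat.factorial i) ∂F₂.measure)
      < ε₁ + ε₂ := by
  have hfact : (0:ℝ) < (Nat.factorial i : ℝ) := by positivity
  set g : ℝ → ℝ := fun x => Real.exp (-α * x) * (α * x) ^ i / (Nat.factorial i) with hgdef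
  have hgcont : Continuous g := by fun_prop
  have hgnn : ∀ x : ℝ, 0 < x → 0 ≤ g x := by
    intro x hx
    have hax : (0:ℝ) ≤ α * x := by positivity
    exact div_nonneg (mul_nonneg (Real.exp_pos _).le (pow_nonneg hax i)) hfact.le
  have hg1 : ∀ x : ℝ, 0 < x → g x ≤ 1 := by
    intro x hx
    have hax : 0 < α * x := by positivity
    have h1 : (α*x)^i / (i.factorial:ℝ) ≤ Real.exp (α*x) := aux_pow_le_exp _ hax.le i
    have h3 : g x = Real.exp (-(α*x)) * ((α*x)^i / i.factorial) := by
      simp only [hgdef, neg_mul, mul_div_assoc]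
    rw [h3]
    calc Real.exp (-(α*x)) * ((α*x)^i / i.factorial)
        ≤ Real.exp (-(α*x)) * Real.exp (α*x) :=
          mul_le_mul_of_nonneg_left h1 (Real.exp_pos _).le
      _ = 1 := by rw [← Real.exp_add]; simp
  have hgdecay : ∀ x : ℝ, 0 < x → g x ≤ (i+1)/(α*x) := by
    intro x hx
    have hy : 0 < α * x := by positivity
    set y := α * x with hydef
    have h1 : y^(i+1) / ((i+1).factorial:ℝ) ≤ Real.exp y := aux_pow_le_exp y hy.le (i+1)
    have h2 : y^i / (i.factorial:ℝ) = (y^(i+1) / ((i+1).factorial:ℝ)) * ((i+1)/y) := by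
      rw [Nat.factorial_succ, pow_succ]
      push_cast
      field_simp
    have h3 : g x = Real.exp (-y) * (y^i / i.factorial) := by
      simp only [hgdef, hydef, neg_mul, mul_div_assoc]
    rw [h3, h2]
    calc Real.exp (-y) * (y^(i+1)/((i+1).factorial:ℝ) * ((i+1)/y))
        ≤ Real.exp (-y) * (Real.exp y * ((i+1)/y)) := by
          apply mul_le_mul_of_nonneg_left _ (Real.exp_pos _).le
          exact mul_le_mul_of_nonneg_right h1 (by positivity)
      _ = (i+1)/y := by rw [← mul_assoc, ← Real.exp_add]; simp
  have hgmono : ∀ x z : ℝ, 0 < x → x ≤ z → α * z ≤ i → g x ≤ g z := by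
    intro x z hx hxz hz
    simp only [hgdef, neg_mul]
    rw [div_le_div_iff₀ hfact hfact]
    refine mul_le_mul_of_nonneg_right ?_ hfact.le
    exact aux_mono i (by positivity) (mul_le_mul_of_nonneg_left hxz hα.le) hz
  have hganti : ∀ x z : ℝ, (i:ℝ) ≤ α * x → x ≤ z → g z ≤ g x := by
    intro x z hix hxz
    have hi0 : (0:ℝ) < i := by exact_mod_cast Nat.lt_of_lt_of_le Nat.zero_lt_one hi
    have hax : 0 < α * x := lt_of_lt_of_le hi0 hix
    simp only [hgdef, neg_mul]
    rw [div_le_div_iff₀ hfact hfact]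
    refine mul_le_mul_of_nonneg_right ?_ hfact.le
    exact aux_anti i hix hax (mul_le_mul_of_nonneg_left hxz hα.le)
  -- basic bounds on F₁, F₂
  have hF₁nn : ∀ x : ℝ, 0 ≤ x → 0 ≤ F₁ x := by
    intro x hx; rw [← hF₁0 0 le_rfl]; exact F₁.mono hx
  have hF₂nn : ∀ x : ℝ, 0 ≤ x → 0 ≤ F₂ x := by
    intro x hx; rw [← hF₂0 0 le_rfl]; exact F₂.mono hx
  have hF₁le1 : ∀ x : ℝ, F₁ x ≤ 1 := fun x => F₁.mono.ge_of_tendsto hF₁1 x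
  have hF₂le1 : ∀ x : ℝ, F₂ x ≤ 1 := fun x => F₂.mono.ge_of_tendsto hF₂1 x
  set t₁ := max (⨆ x : Ioi (0 : ℝ), (F₁ x - F₂ x)) 0 with ht₁def
  set t₂ := max (⨆ x : Ioi (0 : ℝ), (F₂ x - F₁ x)) 0 with ht₂def
  have ht₁ε : t₁ < ε₁ := max_lt hsup₁ hε₁
  have ht₂ε : t₂ < ε₂ := max_lt hsup₂ hε₂
  have ht₁0 : 0 ≤ t₁ := le_max_right _ _
  have ht₂0 : 0 ≤ t₂ := le_max_right _ _
  have hpt₁ : ∀ x > (0:ℝ), F₁ x - F₂ x ≤ t₁ := by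
    intro x hx
    refine le_trans (le_ciSup (f := fun x : Ioi (0:ℝ) => F₁ x - F₂ x) ?_ ⟨x, hx⟩) (le_max_left _ _)
    refine ⟨1, ?_⟩
    rintro _ ⟨⟨y, hy⟩, rfl⟩
    have h1 := hF₁le1 y
    have h2 := hF₂nn y (le_of_lt hy)
    simp only
    linarith
  have hpt₂ : ∀ x > (0:ℝ), F₂ x - F₁ x ≤ t₂ := by
    intro x hx
    refine le_trans (le_ciSup (f := fun x : Ioi (0:ℝ) => F₂ x - F₁ x) ?_ ⟨x, hx⟩) (le_max_left _ _)
    refine ⟨1, ?_⟩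
    rintro _ ⟨⟨y, hy⟩, rfl⟩
    have h1 := hF₂le1 y
    have h2 := hF₁nn y (le_of_lt hy)
    simp only
    linarith
  -- total mass
  have hbot₁ : Tendsto F₁ atBot (nhds 0) := by
    apply tendsto_const_nhds.congr'
    filter_upwards [Iic_mem_atBot (0:ℝ)] with x hx
    exact (hF₁0 x hx).symm
  have hbot₂ : Tendsto F₂ atBot (nhds 0) := by
    apply tendsto_const_nhds.congr'
    filter_upwards [Iic_mem_atBot (0:ℝ)] with x hx
    exact (hF₂0 x hx).symm
  have hμ₁univ : F₁.measure univ = 1 := by rw [F₁.measure_univ hbot₁ hF₁1]; simp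
  have hμ₂univ : F₂.measure univ = 1 := by rw [F₂.measure_univ hbot₂ hF₂1]; simp
  -- superlevel sets
  set S : ℝ → Set ℝ := fun t => {a : ℝ | t < g a} ∩ Ioi 0 with hSdef
  have hmeas_lt : ∀ t : ℝ, MeasurableSet {a : ℝ | t < g a} := fun t =>
    measurableSet_lt measurable_const hgcont.measurable
  have hnn₁ : 0 ≤ᵐ[F₁.measure.restrict (Ioi 0)] g :=
    ae_restrict_of_forall_mem measurableSet_Ioi (fun x hx => hgnn x hx)
  have hnn₂ : 0 ≤ᵐ[F₂.measure.restrict (Ioi 0)] g :=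
    ae_restrict_of_forall_mem measurableSet_Ioi (fun x hx => hgnn x hx)
  have hI₁ : ∫ x in Ioi (0:ℝ), g x ∂F₁.measure
      = (∫⁻ x in Ioi (0:ℝ), ENNReal.ofReal (g x) ∂F₁.measure).toReal :=
    integral_eq_lintegral_of_nonneg_ae hnn₁ hgcont.aestronglyMeasurable
  have hI₂ : ∫ x in Ioi (0:ℝ), g x ∂F₂.measure
      = (∫⁻ x in Ioi (0:ℝ), ENNReal.ofReal (g x) ∂F₂.measure).toReal :=
    integral_eq_lintegral_of_nonneg_ae hnn₂ hgcont.aestronglyMeasurable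
  have hL₁ : ∫⁻ x in Ioi (0:ℝ), ENNReal.ofReal (g x) ∂F₁.measure
      = ∫⁻ t in Ioi (0:ℝ), F₁.measure (S t) := by
    rw [lintegral_eq_lintegral_meas_lt _ hnn₁ hgcont.aemeasurable]
    exact lintegral_congr fun t => by rw [Measure.restrict_apply (hmeas_lt t)]
  have hL₂ : ∫⁻ x in Ioi (0:ℝ), ENNReal.ofReal (g x) ∂F₂.measure
      = ∫⁻ t in Ioi (0:ℝ), F₂.measure (S t) := by
    rw [lintegral_eq_lintegral_meas_lt _ hnn₂ hgcont.aemeasurable]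
    exact lintegral_congr fun t => by rw [Measure.restrict_apply (hmeas_lt t)]
  -- key comparison
  have hcomp : ∀ t ∈ Ioi (0:ℝ), F₁.measure (S t)
      ≤ F₂.measure (S t) + (Ioc (0:ℝ) 1).indicator (fun _ => ENNReal.ofReal (t₁ + t₂)) t := by
    intro t ht
    rcases le_or_gt t 1 with h1 | h1
    · rw [Set.indicator_of_mem (show t ∈ Ioc (0:ℝ) 1 from ⟨ht, h1⟩)]
      refine aux_key_measure F₁ F₂ t₁ t₂ ht₁0 ht₂0 hpt₁ hpt₂ (hF₁0 0 le_rfl) (hF₂0 0 le_rfl)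
        (S t) inter_subset_right ((isOpen_lt continuous_const hgcont).inter isOpen_Ioi) ?_ ?_
      · constructor
        rintro x ⟨hxg, hx0⟩ z ⟨hzg, hz0⟩ y ⟨hxy, hyz⟩
        refine ⟨?_, lt_of_lt_of_le hx0 hxy⟩
        rcases le_or_gt (α * y) (i:ℝ) with hc | hc
        · exact lt_of_lt_of_le hxg (hgmono x y hx0 hxy hc)
        · exact lt_of_lt_of_le hzg (hganti y z hc.le hyz)
      · refine ⟨((i:ℝ)+1)/(α*t), ?_⟩
        rintro x ⟨hxg, hx0⟩
        have hx0' : (0:ℝ) < x := hx0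
        have hax : 0 < α * x := by positivity
        have ht' : (0:ℝ) < t := ht
        have hat : 0 < α * t := by positivity
        have h2 : t * (α * x) < (i:ℝ)+1 := by
          have := lt_of_lt_of_le hxg (hgdecay x hx0')
          rwa [lt_div_iff₀ hax] at this
        rw [le_div_iff₀ hat]
        have hxy : x * (α * t) = t * (α * x) := by ring
        linarith
    · have hSempty : S t = ∅ := by
        apply eq_empty_iff_forall_notMem.mpr
        rintro x ⟨hxg, hx0⟩
        exact absurd hxg (not_lt.mpr (le_trans (hg1 x hx0) h1.le))
      rw [hSempty]
      simp
  have hmono_le : (∫⁻ t in Ioi (0:ℝ), F₁.measure (S t))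
      ≤ ∫⁻ t in Ioi (0:ℝ), (F₂.measure (S t)
          + (Ioc (0:ℝ) 1).indicator (fun _ => ENNReal.ofReal (t₁ + t₂)) t) := by
    apply lintegral_mono_ae
    filter_upwards [ae_restrict_mem measurableSet_Ioi] with t ht using hcomp t ht
  have hsplit : (∫⁻ t in Ioi (0:ℝ), (F₂.measure (S t)
          + (Ioc (0:ℝ) 1).indicator (fun _ => ENNReal.ofReal (t₁ + t₂)) t))
      = (∫⁻ t in Ioi (0:ℝ), F₂.measure (S t)) + ENNReal.ofReal (t₁ + t₂) := by
    rw [lintegral_add_right _ (measurable_const.indicator measurableSet_Ioc)]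
    congr 1
    rw [lintegral_indicator measurableSet_Ioc, setLIntegral_const,
      Measure.restrict_apply measurableSet_Ioc]
    have : Ioc (0:ℝ) 1 ∩ Ioi 0 = Ioc (0:ℝ) 1 :=
      inter_eq_self_of_subset_left Ioc_subset_Ioi_self
    rw [this, Real.volume_Ioc]
    norm_num
  have hfin₂ : (∫⁻ t in Ioi (0:ℝ), F₂.measure (S t)) ≠ ⊤ := by
    rw [← hL₂]
    have hb : (∫⁻ x in Ioi (0:ℝ), ENNReal.ofReal (g x) ∂F₂.measure)
        ≤ ∫⁻ x in Ioi (0:ℝ), 1 ∂F₂.measure := by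
      apply lintegral_mono_ae
      filter_upwards [ae_restrict_mem measurableSet_Ioi] with x hx
      exact ENNReal.ofReal_le_one.mpr (hg1 x hx)
    refine ne_top_of_le_ne_top ?_ hb
    rw [setLIntegral_one]
    exact ne_of_lt (lt_of_le_of_lt (measure_mono (subset_univ _))
      (by rw [hμ₂univ]; exact ENNReal.one_lt_top))
  have hL1le : (∫⁻ t in Ioi (0:ℝ), F₁.measure (S t))
      ≤ (∫⁻ t in Ioi (0:ℝ), F₂.measure (S t)) + ENNReal.ofReal (t₁ + t₂) :=
    hsplit ▸ hmono_le
  have hne : (∫⁻ t in Ioi (0:ℝ), F₂.measure (S t)) + ENNReal.ofReal (t₁ + t₂) ≠ ⊤ :=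
    ENNReal.add_ne_top.mpr ⟨hfin₂, ENNReal.ofReal_ne_top⟩
  have h2 : (∫⁻ t in Ioi (0:ℝ), F₁.measure (S t)).toReal
      ≤ (∫⁻ t in Ioi (0:ℝ), F₂.measure (S t)).toReal + (t₁ + t₂) := by
    calc (∫⁻ t in Ioi (0:ℝ), F₁.measure (S t)).toReal
        ≤ ((∫⁻ t in Ioi (0:ℝ), F₂.measure (S t)) + ENNReal.ofReal (t₁ + t₂)).toReal :=
          ENNReal.toReal_mono hne hL1le
      _ = (∫⁻ t in Ioi (0:ℝ), F₂.measure (S t)).toReal + (t₁ + t₂) := by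
          rw [ENNReal.toReal_add hfin₂ ENNReal.ofReal_ne_top,
            ENNReal.toReal_ofReal (by linarith)]
  rw [hI₁, hI₂, hL₁, hL₂]
  linarith
end

section
/- For any z ≥ 0, ∫₀^z (1 − e^{-2(z−x)²}) · 4x e^{-2x²} dx = 1 − e^{-2z²} − √π · z · e^{-z²} · (2Φ(√2 z) − 1), where Φ is the standard normal CDF. -/
open MeasureTheory Set

open Real intervalIntegral

lemma gauss_integrable : Integrable (fun y : ℝ => Real.exp (-y ^ 2 / 2)) := by
  have h := integrable_exp_neg_mul_sq (show (0:ℝ) < 1/2 by norm_num)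
  convert h using 2 with y
  ring_nf

lemma gauss_hasDerivAt (t : ℝ) :
    HasDerivAt (fun u : ℝ => ∫ y in Iic u, Real.exp (-y ^ 2 / 2)) (Real.exp (-t ^ 2 / 2)) t := by
  have hfun : (fun u : ℝ => ∫ y in Iic u, Real.exp (-y ^ 2 / 2))
      = fun u => (∫ y in Iic t, Real.exp (-y ^ 2 / 2)) + ∫ y in t..u, Real.exp (-y ^ 2 / 2) := by
    funext u
    rw [← intervalIntegral.integral_Iic_sub_Iic gauss_integrable.integrableOn
      gauss_integrable.integrableOn]
    ring
  rw [hfun]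
  exact ((intervalIntegral.integral_hasDerivAt_right
    gauss_integrable.intervalIntegrable
    ((Continuous.stronglyMeasurableAtFilter (by fun_prop) _ _))
    (by fun_prop)).const_add _)

lemma gauss_symm (t : ℝ) :
    (∫ y in Iic t, Real.exp (-y ^ 2 / 2)) + (∫ y in Iic (-t), Real.exp (-y ^ 2 / 2))
      = Real.sqrt (2 * Real.pi) := by
  have h1 : (∫ y in Iic t, Real.exp (-y ^ 2 / 2)) = ∫ y in Ioi (-t), Real.exp (-y ^ 2 / 2) := by
    rw [← integral_comp_neg_Iic t]
    congr 1; funext y; ring_nf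
  rw [h1, add_comm, integral_Iic_add_Ioi gauss_integrable.integrableOn
    gauss_integrable.integrableOn]
  have h2 : (∫ y : ℝ, Real.exp (-y ^ 2 / 2)) = ∫ y : ℝ, Real.exp (-(1/2) * y ^ 2) := by
    congr 1; funext y; ring_nf
  rw [h2, integral_gaussian]
  norm_num
  ring

/-- The standard normal cumulative distribution function. -/
noncomputable def stdNormalCDF (t : ℝ) : ℝ :=
  (Real.sqrt (2 * Real.pi))⁻¹ * ∫ y in Iic t, Real.exp (-y ^ 2 / 2)

theorem stmt_7 (z : ℝ) (hz : 0 ≤ z) :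
    ∫ x in (0 : ℝ)..z, (1 - Real.exp (-2 * (z - x) ^ 2)) * (4 * x * Real.exp (-2 * x ^ 2))
      = 1 - Real.exp (-2 * z ^ 2)
        - Real.sqrt Real.pi * z * Real.exp (-z ^ 2) * (2 * stdNormalCDF (Real.sqrt 2 * z) - 1) := by
  have hs2 : Real.sqrt 2 * Real.sqrt 2 = 2 := Real.mul_self_sqrt (by norm_num)
  set G : ℝ → ℝ := fun u => ∫ y in Iic u, Real.exp (-y ^ 2 / 2) with hGdef
  -- Part 1: ∫ 4x e^{-2x²}
  have hpart1 : ∫ x in (0:ℝ)..z, 4 * x * Real.exp (-2 * x ^ 2)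
      = 1 - Real.exp (-2 * z ^ 2) := by
    have hd : ∀ x ∈ Set.uIcc (0:ℝ) z,
        HasDerivAt (fun x => -Real.exp (-2 * x ^ 2)) (4 * x * Real.exp (-2 * x ^ 2)) x := by
      intro x _
      have h := (((hasDerivAt_pow 2 x).const_mul (-2:ℝ)).exp).neg
      refine h.congr_deriv ?_
      ring
    rw [intervalIntegral.integral_eq_sub_of_hasDerivAt hd
      (Continuous.intervalIntegrable (by fun_prop) _ _)]
    simp
    ring
  -- Part 2: the cross term
  have hpart2 : ∫ x in (0:ℝ)..z, Real.exp (-2 * (z - x) ^ 2) * (4 * x * Real.exp (-2 * x ^ 2))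
      = z * Real.exp (-z ^ 2) * Real.sqrt 2 / 2 * (G (Real.sqrt 2 * z) - G (-(Real.sqrt 2 * z))) := by
    have hd : ∀ x ∈ Set.uIcc (0:ℝ) z,
        HasDerivAt (fun x => -(1/2) * Real.exp (-4 * (x - z/2) ^ 2 - z ^ 2)
            + z * Real.exp (-z ^ 2) * Real.sqrt 2 / 2 * G (2 * Real.sqrt 2 * (x - z/2)))
          (Real.exp (-2 * (z - x) ^ 2) * (4 * x * Real.exp (-2 * x ^ 2))) x := by
      intro x _
      have d1 : HasDerivAt (fun x => -(1/2) * Real.exp (-4 * (x - z/2) ^ 2 - z ^ 2))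
          (4 * (x - z/2) * Real.exp (-4 * (x - z/2) ^ 2 - z ^ 2)) x := by
        have hinner : HasDerivAt (fun x : ℝ => -4 * (x - z/2) ^ 2 - z ^ 2)
            (-8 * (x - z/2)) x := by
          have h := ((((hasDerivAt_id x).sub_const (z/2)).pow 2).const_mul (-4:ℝ)).sub_const
            (z ^ 2)
          refine h.congr_deriv ?_
          simp only [id_eq]
          ring
        have h := hinner.exp.const_mul (-(1/2) : ℝ)
        refine h.congr_deriv ?_
        ring
      have d2 : HasDerivAt (fun x => G (2 * Real.sqrt 2 * (x - z/2)))
          (Real.exp (-(2 * Real.sqrt 2 * (x - z/2)) ^ 2 / 2) * (2 * Real.sqrt 2)) x := by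
        have hlin : HasDerivAt (fun x : ℝ => 2 * Real.sqrt 2 * (x - z/2))
            (2 * Real.sqrt 2) x := by
          simpa using ((hasDerivAt_id x).sub_const (z/2)).const_mul (2 * Real.sqrt 2)
        exact (gauss_hasDerivAt _).comp x hlin
      have h := d1.add (d2.const_mul (z * Real.exp (-z ^ 2) * Real.sqrt 2 / 2))
      refine h.congr_deriv ?_
      symm
      have hB : -(2 * Real.sqrt 2 * (x - z/2)) ^ 2 / 2 = -4 * (x - z/2) ^ 2 := by
        have : (2 * Real.sqrt 2 * (x - z/2)) ^ 2 = 8 * (x - z/2) ^ 2 := by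
          rw [mul_pow, mul_pow, Real.sq_sqrt (by norm_num : (0:ℝ) ≤ 2)]; ring
        rw [this]; ring
      rw [hB]
      have hE : Real.exp (-2 * (z - x) ^ 2) * Real.exp (-2 * x ^ 2)
          = Real.exp (-4 * (x - z/2) ^ 2 - z ^ 2) := by
        rw [← Real.exp_add]; ring_nf
      have hE2 : Real.exp (-z ^ 2) * Real.exp (-4 * (x - z/2) ^ 2)
          = Real.exp (-4 * (x - z/2) ^ 2 - z ^ 2) := by
        rw [← Real.exp_add]; ring_nf
      linear_combination (4 * x) * hE - (2 * z) * hE2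
        - (z * (Real.exp (-z ^ 2) * Real.exp (-4 * (x - z/2) ^ 2))) * hs2
    rw [intervalIntegral.integral_eq_sub_of_hasDerivAt hd
      (Continuous.intervalIntegrable (by fun_prop) _ _)]
    rw [show 2 * Real.sqrt 2 * (z - z/2) = Real.sqrt 2 * z by ring,
      show 2 * Real.sqrt 2 * ((0:ℝ) - z/2) = -(Real.sqrt 2 * z) by ring,
      show -4 * (z - z/2) ^ 2 - z ^ 2 = -2 * z ^ 2 by ring,
      show -4 * ((0:ℝ) - z/2) ^ 2 - z ^ 2 = -2 * z ^ 2 by ring]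
    ring
  -- Split the integral
  have hsplit : ∫ x in (0:ℝ)..z, (1 - Real.exp (-2 * (z - x) ^ 2)) * (4 * x * Real.exp (-2 * x ^ 2))
      = (∫ x in (0:ℝ)..z, 4 * x * Real.exp (-2 * x ^ 2))
        - ∫ x in (0:ℝ)..z, Real.exp (-2 * (z - x) ^ 2) * (4 * x * Real.exp (-2 * x ^ 2)) := by
    rw [← intervalIntegral.integral_sub (Continuous.intervalIntegrable (by fun_prop) _ _)
      (Continuous.intervalIntegrable (by fun_prop) _ _)]
    congr 1
    funext x
    ring
  rw [hsplit, hpart1, hpart2]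
  have hsym := gauss_symm (Real.sqrt 2 * z)
  rw [stdNormalCDF]
  have hπ : Real.sqrt (2 * Real.pi) = Real.sqrt 2 * Real.sqrt Real.pi :=
    Real.sqrt_mul (by norm_num) _
  rw [hπ] at hsym ⊢
  have h2ne : Real.sqrt 2 ≠ 0 := by positivity
  have hπne : Real.sqrt Real.pi ≠ 0 := by positivity
  have hA : G (-(Real.sqrt 2 * z)) = Real.sqrt 2 * Real.sqrt Real.pi - G (Real.sqrt 2 * z) := by
    simp only [hGdef]; linarith [hsym]
  rw [hA]
  field_simp
  rw [show (∫ y in Iic (z * Real.sqrt 2), Real.exp (-(y ^ 2 / 2))) = G (z * Real.sqrt 2) by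
    simp only [hGdef, neg_div]]
  linear_combination (-(z * Real.exp (-z ^ 2)
    * (2 * G (z * Real.sqrt 2) - Real.sqrt 2 * Real.sqrt Real.pi))) * hs2
end
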